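/- Let ζ(z) = Σ_{k=0}^{n_max} a_k z^k be a polynomial with n_max < ∞, nonnegative integer coefficients, a_0 > 0, a_{n_max} > 0. Then there exists a unique n* ∈ (0, n_max) with β'(n*) = 0, given explicitly by n* = ζ'(1)/ζ(1); moreover β'(n) > 0 for n ∈ (0, n*) and β'(n) < 0 for n ∈ (n*, n_max). -/

import Mathlib

open Filter Topology Set

noncomputable def polyZeta (a : ℕ → ℕ) (nmax : ℕ) (w : ℝ) : ℝ :=
  ∑ k ∈ Finset.range (nmax + 1), (a k : ℝ) * w ^ k

noncomputable def polyS1 (a : ℕ → ℕ) (nmax : ℕ) (w : ℝ) : ℝ :=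
  ∑ k ∈ Finset.range (nmax + 1), (k : ℝ) * (a k : ℝ) * w ^ k

lemma polyZeta_hasDerivAt (a : ℕ → ℕ) (nmax : ℕ) (w : ℝ) :
    HasDerivAt (polyZeta a nmax)
      (∑ k ∈ Finset.range (nmax + 1), (a k : ℝ) * (k * w ^ (k - 1))) w := by
  have : ∀ k ∈ Finset.range (nmax + 1),
      HasDerivAt (fun z : ℝ => (a k : ℝ) * z ^ k) ((a k : ℝ) * (k * w ^ (k - 1))) w := by
    intro k _
    exact (hasDerivAt_pow k w).const_mul _
  exact HasDerivAt.fun_sum this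

lemma mul_deriv_polyZeta (a : ℕ → ℕ) (nmax : ℕ) (w : ℝ) :
    w * deriv (polyZeta a nmax) w = polyS1 a nmax w := by
  rw [(polyZeta_hasDerivAt a nmax w).deriv, Finset.mul_sum, polyS1]
  refine Finset.sum_congr rfl fun k _ => ?_
  cases k with
  | zero => simp
  | succ m => simp [pow_succ]; ring

lemma polyZeta_pos (a : ℕ → ℕ) (nmax : ℕ) (ha0 : 0 < a 0) {w : ℝ} (hw : 0 ≤ w) :
    0 < polyZeta a nmax w := by
  have h1 : ((a 0 : ℝ) * w ^ 0) ≤ polyZeta a nmax w := by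
    apply Finset.single_le_sum (f := fun k => (a k : ℝ) * w ^ k)
    · intro i _; positivity
    · simp
  have : (0:ℝ) < (a 0 : ℝ) * w ^ 0 := by
    simpa using (by exact_mod_cast ha0 : (0:ℝ) < a 0)
  linarith

lemma polyS1_nonneg (a : ℕ → ℕ) (nmax : ℕ) {w : ℝ} (hw : 0 ≤ w) :
    0 ≤ polyS1 a nmax w := by
  apply Finset.sum_nonneg; intro i _; positivity

lemma polyS1_pos (a : ℕ → ℕ) (nmax : ℕ) (hnmax : 1 ≤ nmax) (hatop : 0 < a nmax)
    {w : ℝ} (hw : 0 < w) : 0 < polyS1 a nmax w := by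
  have h1 : ((nmax : ℝ) * (a nmax : ℝ) * w ^ nmax) ≤ polyS1 a nmax w := by
    apply Finset.single_le_sum (f := fun k : ℕ => (k : ℝ) * (a k : ℝ) * w ^ k)
    · intro i _; positivity
    · simp
  have h2 : (0:ℝ) < (nmax : ℝ) * (a nmax : ℝ) * w ^ nmax := by
    have : (0:ℝ) < nmax := by exact_mod_cast hnmax
    have : (0:ℝ) < (a nmax : ℝ) := by exact_mod_cast hatop
    positivity
  linarith

lemma polyS1_lt (a : ℕ → ℕ) (nmax : ℕ) (hnmax : 1 ≤ nmax) (ha0 : 0 < a 0) {w : ℝ} (hw : 0 ≤ w) :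
    polyS1 a nmax w < (nmax : ℝ) * polyZeta a nmax w := by
  have key : (nmax : ℝ) * polyZeta a nmax w - polyS1 a nmax w
      = ∑ k ∈ Finset.range (nmax + 1), ((nmax : ℝ) - k) * (a k : ℝ) * w ^ k := by
    rw [polyZeta, polyS1, Finset.mul_sum, ← Finset.sum_sub_distrib]
    refine Finset.sum_congr rfl fun k _ => ?_; ring
  have h1 : ((nmax : ℝ) - (0:ℕ)) * (a 0 : ℝ) * w ^ (0:ℕ)
      ≤ ∑ k ∈ Finset.range (nmax + 1), ((nmax : ℝ) - k) * (a k : ℝ) * w ^ k := by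
    apply Finset.single_le_sum (f := fun k : ℕ => ((nmax : ℝ) - k) * (a k : ℝ) * w ^ k)
    · intro i hi
      have : (i : ℝ) ≤ nmax := by
        have := Finset.mem_range.mp hi; exact_mod_cast Nat.lt_succ_iff.mp this
      have h3 : (0:ℝ) ≤ (nmax : ℝ) - i := by linarith
      positivity
    · simp
  have h2 : (0:ℝ) < ((nmax : ℝ) - (0:ℕ)) * (a 0 : ℝ) * w ^ (0:ℕ) := by
    have h4 : (0:ℝ) < (a 0 : ℝ) := by exact_mod_cast ha0
    have h5 : (0:ℝ) < nmax := by exact_mod_cast hnmax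
    simp only [Nat.cast_zero, sub_zero, pow_zero, mul_one]
    positivity
  linarith

lemma polyZeta_continuous (a : ℕ → ℕ) (nmax : ℕ) : Continuous (polyZeta a nmax) := by
  unfold polyZeta; continuity

lemma polyS1_continuous (a : ℕ → ℕ) (nmax : ℕ) : Continuous (polyS1 a nmax) := by
  unfold polyS1; continuity

noncomputable def polyG (a : ℕ → ℕ) (nmax : ℕ) (w : ℝ) : ℝ :=
  polyS1 a nmax w / polyZeta a nmax w

lemma polyG_tendsto_zero (a : ℕ → ℕ) (nmax : ℕ) (ha0 : 0 < a 0) :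
    Tendsto (polyG a nmax) (𝓝[>] (0:ℝ)) (𝓝 0) := by
  have h0 : polyS1 a nmax 0 = 0 := by
    unfold polyS1
    apply Finset.sum_eq_zero
    intro k _
    cases k with
    | zero => simp
    | succ m => simp [zero_pow]
  have hz : polyZeta a nmax 0 ≠ 0 := ne_of_gt (polyZeta_pos a nmax ha0 le_rfl)
  have hc : ContinuousAt (polyG a nmax) 0 :=
    ((polyS1_continuous a nmax).continuousAt).div ((polyZeta_continuous a nmax).continuousAt) hz
  have h1 : polyG a nmax 0 = 0 := by simp [polyG, h0]
  have h2 := hc.tendsto.mono_left (nhdsWithin_le_nhds (s := Ioi (0:ℝ)))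
  rwa [h1] at h2

lemma polyG_strictMonoOn (a : ℕ → ℕ) (nmax : ℕ) (hnmax : 1 ≤ nmax)
    (ha0 : 0 < a 0) (hatop : 0 < a nmax)
    (hinj : InjOn (polyG a nmax) (Ioi (0:ℝ))) :
    StrictMonoOn (polyG a nmax) (Ioi (0:ℝ)) := by
  have hGpos : ∀ w : ℝ, 0 < w → 0 < polyG a nmax w := fun w hw =>
    div_pos (polyS1_pos a nmax hnmax hatop hw) (polyZeta_pos a nmax ha0 hw.le)
  have hGcont : ContinuousOn (polyG a nmax) (Ioi (0:ℝ)) := by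
    intro w hw
    exact (((polyS1_continuous a nmax).continuousAt).div
      ((polyZeta_continuous a nmax).continuousAt)
      (ne_of_gt (polyZeta_pos a nmax ha0 (le_of_lt hw)))).continuousWithinAt
  intro u hu v hv huv
  rcases lt_trichotomy (polyG a nmax u) (polyG a nmax v) with h | h | h
  · exact h
  · exact absurd (hinj hu hv h) (ne_of_lt huv)
  · exfalso
    -- g v < g u; show g ε ≥ g u for all small ε, contradicting tendsto 0
    have hu' : (0:ℝ) < u := hu
    have hanti : ∀ ε : ℝ, 0 < ε → ε < u → polyG a nmax u < polyG a nmax ε := by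
      intro ε hε hεu
      have hεv : ε ≤ v := by linarith [huv]
      have hsub : Icc ε v ⊆ Ioi (0:ℝ) := fun x hx => lt_of_lt_of_le hε hx.1
      rcases ContinuousOn.strictMonoOn_of_injOn_Icc' hεv (hGcont.mono hsub)
          (hinj.mono hsub) with hm | ha
      · have := hm ⟨le_of_lt hεu, by linarith⟩ ⟨by linarith, le_refl v⟩ huv
        linarith
      · exact ha ⟨le_refl ε, hεv⟩ ⟨le_of_lt hεu, by linarith⟩ hεu
    have hev : ∀ᶠ ε in 𝓝[>] (0:ℝ), polyG a nmax u ≤ polyG a nmax ε := by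
      filter_upwards [Ioo_mem_nhdsGT_of_mem (by exact ⟨le_refl (0:ℝ), hu'⟩ : (0:ℝ) ∈ Ico (0:ℝ) u)]
        with ε hε
      exact le_of_lt (hanti ε hε.1 hε.2)
    have := ge_of_tendsto (polyG_tendsto_zero a nmax ha0) hev
    linarith [hGpos u hu']

/-- For a polynomial ζ (n_max < ∞, a₀ > 0, a_{n_max} > 0), with z₀(n) the
unique positive saddle point and β(n) = ln ζ(z₀(n)) − n ln z₀(n), there is a unique
n* ∈ (0, n_max) with β'(n*) = 0, namely n* = ζ'(1)/ζ(1); moreover β' > 0 on (0, n*)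
and β' < 0 on (n*, n_max). -/
theorem typical_ee_beta_max (nmax : ℕ) (hnmax : 1 ≤ nmax) (a : ℕ → ℕ)
    (ha0 : 0 < a 0) (hatop : 0 < a nmax)
    (z0 : ℝ → ℝ)
    (hz0 : ∀ n : ℝ, n ∈ Set.Ioo (0 : ℝ) (nmax : ℝ) →
      0 < z0 n ∧ z0 n * deriv (polyZeta a nmax) (z0 n) = n * polyZeta a nmax (z0 n) ∧
        (∀ w : ℝ, 0 < w →
          w * deriv (polyZeta a nmax) w = n * polyZeta a nmax w → w = z0 n)) :
    ∃ nstar : ℝ, nstar = deriv (polyZeta a nmax) 1 / polyZeta a nmax 1 ∧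
      nstar ∈ Set.Ioo (0 : ℝ) (nmax : ℝ) ∧
      deriv (fun m : ℝ => Real.log (polyZeta a nmax (z0 m)) - m * Real.log (z0 m)) nstar = 0 ∧
      (∀ n ∈ Set.Ioo (0 : ℝ) nstar,
        0 < deriv (fun m : ℝ => Real.log (polyZeta a nmax (z0 m)) - m * Real.log (z0 m)) n) ∧
      (∀ n ∈ Set.Ioo nstar (nmax : ℝ),
        deriv (fun m : ℝ => Real.log (polyZeta a nmax (z0 m)) - m * Real.log (z0 m)) n < 0) ∧
      (∀ n ∈ Set.Ioo (0 : ℝ) (nmax : ℝ),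
        deriv (fun m : ℝ => Real.log (polyZeta a nmax (z0 m)) - m * Real.log (z0 m)) n = 0 →
          n = nstar) := by
  set Z := polyZeta a nmax with hZ
  set G := polyG a nmax with hG
  set β := fun m : ℝ => Real.log (Z (z0 m)) - m * Real.log (z0 m) with hβ
  have hZpos : ∀ w : ℝ, 0 ≤ w → 0 < Z w := fun w hw => polyZeta_pos a nmax ha0 hw
  have hGmem : ∀ w : ℝ, 0 < w → G w ∈ Set.Ioo (0:ℝ) (nmax:ℝ) := by
    intro w hw
    constructor
    · exact div_pos (polyS1_pos a nmax hnmax hatop hw) (hZpos w hw.le)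
    · rw [hG, polyG, div_lt_iff₀ (hZpos w hw.le)]
      linarith [polyS1_lt a nmax hnmax ha0 hw.le]
  have heq : ∀ w : ℝ, 0 < w → ∀ n : ℝ,
      (w * deriv Z w = n * Z w ↔ G w = n) := by
    intro w hw n
    rw [hZ, mul_deriv_polyZeta, hG, polyG, div_eq_iff (ne_of_gt (hZpos w hw.le))]
  have hz0pos : ∀ n ∈ Set.Ioo (0:ℝ) (nmax:ℝ), 0 < z0 n := fun n hn => (hz0 n hn).1
  have hz0eq : ∀ n ∈ Set.Ioo (0:ℝ) (nmax:ℝ), G (z0 n) = n := by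
    intro n hn
    exact (heq (z0 n) (hz0pos n hn) n).mp (hz0 n hn).2.1
  have huniq : ∀ n ∈ Set.Ioo (0:ℝ) (nmax:ℝ), ∀ w : ℝ, 0 < w → G w = n → w = z0 n := by
    intro n hn w hw hGw
    exact (hz0 n hn).2.2 w hw ((heq w hw n).mpr hGw)
  have hinj : InjOn G (Ioi (0:ℝ)) := by
    intro w1 h1 w2 h2 he
    have hm := hGmem w1 h1
    rw [huniq (G w1) hm w1 h1 rfl, huniq (G w1) hm w2 h2 he.symm]
  have hmono : StrictMonoOn G (Ioi (0:ℝ)) := polyG_strictMonoOn a nmax hnmax ha0 hatop hinj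
  have hz0mono : ∀ n ∈ Set.Ioo (0:ℝ) (nmax:ℝ), ∀ n' ∈ Set.Ioo (0:ℝ) (nmax:ℝ),
      n < n' → z0 n < z0 n' := by
    intro n hn n' hn' hlt
    rcases lt_trichotomy (z0 n) (z0 n') with h | h | h
    · exact h
    · exfalso; have := hz0eq n hn; rw [h, hz0eq n' hn'] at this; linarith
    · exfalso
      have := hmono (Set.mem_Ioi.mpr (hz0pos n' hn')) (Set.mem_Ioi.mpr (hz0pos n hn)) h
      rw [hz0eq n hn, hz0eq n' hn'] at this; linarith
  -- continuity of z0 on the open interval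
  have hz0cont : ∀ n ∈ Set.Ioo (0:ℝ) (nmax:ℝ), ContinuousAt z0 n := by
    intro n hn
    rw [Metric.continuousAt_iff]
    intro ε hε
    set ε' := min (ε/2) (z0 n / 2) with hε'def
    have hε'pos : 0 < ε' := lt_min (by linarith) (by linarith [hz0pos n hn])
    have hε'le : ε' ≤ ε/2 := min_le_left _ _
    have hwm : 0 < z0 n - ε' := by
      have := min_le_right (ε/2) (z0 n / 2); have := hz0pos n hn
      simp only [← hε'def] at *; linarith
    have h1 : G (z0 n - ε') < n := by
      have := hmono (Set.mem_Ioi.mpr hwm) (Set.mem_Ioi.mpr (hz0pos n hn)) (by linarith)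
      rwa [hz0eq n hn] at this
    have h2 : n < G (z0 n + ε') := by
      have := hmono (Set.mem_Ioi.mpr (hz0pos n hn))
        (Set.mem_Ioi.mpr (by linarith [hz0pos n hn] : (0:ℝ) < z0 n + ε')) (by linarith)
      rwa [hz0eq n hn] at this
    refine ⟨min (n - G (z0 n - ε')) (min (G (z0 n + ε') - n) (min n ((nmax:ℝ) - n))),
      lt_min (by linarith [h1]) (lt_min (by linarith [h2]) (lt_min hn.1 (by linarith [hn.2]))), ?_⟩
    intro m' hdist
    rw [Real.dist_eq] at hdist ⊢
    have hd1 : |m' - n| < n - G (z0 n - ε') := lt_of_lt_of_le hdist (min_le_left _ _)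
    have hd2 : |m' - n| < G (z0 n + ε') - n :=
      lt_of_lt_of_le hdist ((min_le_right _ _).trans (min_le_left _ _))
    have hd3 : |m' - n| < n :=
      lt_of_lt_of_le hdist ((min_le_right _ _).trans ((min_le_right _ _).trans (min_le_left _ _)))
    have hd4 : |m' - n| < (nmax:ℝ) - n :=
      lt_of_lt_of_le hdist ((min_le_right _ _).trans ((min_le_right _ _).trans (min_le_right _ _)))
    rw [abs_lt] at hd1 hd2 hd3 hd4
    have hm'I : m' ∈ Set.Ioo (0:ℝ) (nmax:ℝ) := ⟨by linarith, by linarith⟩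
    have hm'pos := hz0pos m' hm'I
    have hGm' := hz0eq m' hm'I
    have hu : z0 m' < z0 n + ε' := by
      by_contra h
      push_neg at h
      have := hmono.monotoneOn (Set.mem_Ioi.mpr (by linarith [hz0pos n hn] : (0:ℝ) < z0 n + ε'))
        (Set.mem_Ioi.mpr hm'pos) h
      rw [hGm'] at this; linarith
    have hl : z0 n - ε' < z0 m' := by
      by_contra h
      push_neg at h
      have := hmono.monotoneOn (Set.mem_Ioi.mpr hm'pos) (Set.mem_Ioi.mpr hwm) h
      rw [hGm'] at this; linarith
    rw [abs_lt]; constructor <;> linarith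
  -- the saddle point minimizes log Z w - m log w over w > 0
  have hmin : ∀ m ∈ Set.Ioo (0:ℝ) (nmax:ℝ), ∀ w : ℝ, 0 < w →
      Real.log (Z (z0 m)) - m * Real.log (z0 m) ≤ Real.log (Z w) - m * Real.log w := by
    intro m hm w hw
    set h := fun t : ℝ => Real.log (Z (Real.exp t)) - m * t with hh
    have hderiv : ∀ t : ℝ, HasDerivAt h (G (Real.exp t) - m) t := by
      intro t
      have he : HasDerivAt Real.exp (Real.exp t) t := Real.hasDerivAt_exp t
      have hp := polyZeta_hasDerivAt a nmax (Real.exp t)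
      have h1 : HasDerivAt (fun t : ℝ => Z (Real.exp t))
          ((∑ k ∈ Finset.range (nmax + 1), (a k : ℝ) * (k * (Real.exp t) ^ (k - 1))) * Real.exp t)
          t := hp.comp t he
      have h2 : HasDerivAt (fun t : ℝ => Real.log (Z (Real.exp t)))
          ((∑ k ∈ Finset.range (nmax + 1), (a k : ℝ) * (k * (Real.exp t) ^ (k - 1))) * Real.exp t
            / Z (Real.exp t)) t :=
        h1.log (ne_of_gt (hZpos _ (Real.exp_pos t).le))
      have h3 : HasDerivAt (fun t : ℝ => m * t) m t := by
        simpa using (hasDerivAt_id t).const_mul m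
      have h4 := h2.sub h3
      have key : (∑ k ∈ Finset.range (nmax + 1), (a k : ℝ) * (k * (Real.exp t) ^ (k - 1)))
          * Real.exp t / Z (Real.exp t) = G (Real.exp t) := by
        have := mul_deriv_polyZeta a nmax (Real.exp t)
        rw [hp.deriv] at this
        rw [hG, polyG, ← this, ← hZ]
        ring
      rwa [key] at h4
    have hcont : ∀ s : Set ℝ, ContinuousOn h s := fun s t _ =>
      (hderiv t).continuousAt.continuousWithinAt
    set t0 := Real.log (z0 m) with ht0
    have hz0m := hz0pos m hm
    have hexp_t0 : Real.exp t0 = z0 m := Real.exp_log hz0m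
    have hdnonneg : ∀ t ∈ interior (Ici t0), 0 ≤ deriv h t := by
      intro t ht
      rw [interior_Ici] at ht
      rw [(hderiv t).deriv]
      have hgt : z0 m < Real.exp t := by
        rw [← hexp_t0]; exact Real.exp_lt_exp.mpr ht
      have := hmono (Set.mem_Ioi.mpr hz0m) (Set.mem_Ioi.mpr (Real.exp_pos t)) hgt
      rw [hz0eq m hm] at this
      linarith
    have hdnonpos : ∀ t ∈ interior (Iic t0), deriv h t ≤ 0 := by
      intro t ht
      rw [interior_Iic] at ht
      rw [(hderiv t).deriv]
      have hlt : Real.exp t < z0 m := by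
        rw [← hexp_t0]; exact Real.exp_lt_exp.mpr ht
      have := hmono (Set.mem_Ioi.mpr (Real.exp_pos t)) (Set.mem_Ioi.mpr hz0m) hlt
      rw [hz0eq m hm] at this
      linarith
    have hmonoh : MonotoneOn h (Ici t0) :=
      monotoneOn_of_deriv_nonneg (convex_Ici t0) (hcont _)
        (fun t ht => ((hderiv t).differentiableAt).differentiableWithinAt) hdnonneg
    have hantih : AntitoneOn h (Iic t0) :=
      antitoneOn_of_deriv_nonpos (convex_Iic t0) (hcont _)
        (fun t ht => ((hderiv t).differentiableAt).differentiableWithinAt) hdnonpos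
    have hkey : h t0 ≤ h (Real.log w) := by
      rcases le_total t0 (Real.log w) with hc | hc
      · exact hmonoh (self_mem_Ici) (Set.mem_Ici.mpr hc) hc
      · exact hantih (Set.mem_Iic.mpr hc) (self_mem_Iic) hc
    have hrw : h (Real.log w) = Real.log (Z w) - m * Real.log w := by
      rw [hh]; simp only; rw [Real.exp_log hw]
    have hrw0 : h t0 = Real.log (Z (z0 m)) - m * Real.log (z0 m) := by
      rw [hh]; simp only; rw [hexp_t0, ht0]
    rw [← hrw, ← hrw0]; exact hkey
  -- derivative of beta
  have hbderiv : ∀ n ∈ Set.Ioo (0:ℝ) (nmax:ℝ), HasDerivAt β (-Real.log (z0 n)) n := by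
    intro n hn
    rw [hasDerivAt_iff_isLittleO]
    rw [Asymptotics.isLittleO_iff]
    intro c hc
    have hlogcont : ContinuousAt (fun m => Real.log (z0 m)) n :=
      (Real.continuousAt_log (ne_of_gt (hz0pos n hn))).comp (hz0cont n hn)
    have hev1 : ∀ᶠ m' in 𝓝 n, |Real.log (z0 m') - Real.log (z0 n)| ≤ c := by
      have := hlogcont.tendsto (Metric.closedBall_mem_nhds (Real.log (z0 n)) hc)
      filter_upwards [this] with m' hm'
      have : dist (Real.log (z0 m')) (Real.log (z0 n)) ≤ c := hm'
      rwa [Real.dist_eq] at this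
    have hev2 : ∀ᶠ m' in 𝓝 n, m' ∈ Set.Ioo (0:ℝ) (nmax:ℝ) :=
      isOpen_Ioo.mem_nhds hn
    filter_upwards [hev1, hev2] with m' hlog hm'
    have h1 : β m' ≤ Real.log (Z (z0 n)) - m' * Real.log (z0 n) :=
      hmin m' hm' (z0 n) (hz0pos n hn)
    have h2 : β n ≤ Real.log (Z (z0 m')) - n * Real.log (z0 m') :=
      hmin n hn (z0 m') (hz0pos m' hm')
    have hβm' : β m' = Real.log (Z (z0 m')) - m' * Real.log (z0 m') := rfl
    have hβn : β n = Real.log (Z (z0 n)) - n * Real.log (z0 n) := rfl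
    have hup : β m' - β n + (m' - n) * Real.log (z0 n) ≤ 0 := by
      rw [hβn] at *; linarith
    have hlo : (m' - n) * (Real.log (z0 n) - Real.log (z0 m'))
        ≤ β m' - β n + (m' - n) * Real.log (z0 n) := by
      rw [hβm'] at *; linarith
    have habs : |(m' - n) * (Real.log (z0 n) - Real.log (z0 m'))| ≤ |m' - n| * c := by
      rw [abs_mul]
      apply mul_le_mul_of_nonneg_left _ (abs_nonneg _)
      rw [abs_sub_comm]
      exact hlog
    rw [Real.norm_eq_abs, Real.norm_eq_abs, smul_eq_mul, mul_comm c]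
    rw [abs_le]
    constructor
    · have := neg_abs_le ((m' - n) * (Real.log (z0 n) - Real.log (z0 m')))
      have heq2 : β m' - β n - (m' - n) * -Real.log (z0 n)
          = β m' - β n + (m' - n) * Real.log (z0 n) := by ring
      rw [heq2]
      linarith
    · have heq2 : β m' - β n - (m' - n) * -Real.log (z0 n)
          = β m' - β n + (m' - n) * Real.log (z0 n) := by ring
      rw [heq2]
      have : (0:ℝ) ≤ |m' - n| * c := mul_nonneg (abs_nonneg _) hc.le
      linarith
  have hderivβ : ∀ n ∈ Set.Ioo (0:ℝ) (nmax:ℝ), deriv β n = -Real.log (z0 n) :=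
    fun n hn => (hbderiv n hn).deriv
  -- the critical point
  set nstar := G 1 with hnstar
  have hnstarI : nstar ∈ Set.Ioo (0:ℝ) (nmax:ℝ) := hGmem 1 one_pos
  have hz0star : z0 nstar = 1 := (huniq nstar hnstarI 1 one_pos rfl).symm
  have hstar_eq : nstar = deriv Z 1 / Z 1 := by
    have := mul_deriv_polyZeta a nmax 1
    rw [one_mul] at this
    rw [hnstar, hG, polyG, ← hZ, this]
  refine ⟨nstar, hstar_eq, hnstarI, ?_, ?_, ?_, ?_⟩
  · rw [hderivβ nstar hnstarI, hz0star, Real.log_one, neg_zero]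
  · intro n hn
    have hnI : n ∈ Set.Ioo (0:ℝ) (nmax:ℝ) := ⟨hn.1, lt_trans hn.2 hnstarI.2⟩
    rw [hderivβ n hnI]
    have : z0 n < 1 := by
      have := hz0mono n hnI nstar hnstarI hn.2
      rwa [hz0star] at this
    have := Real.log_neg (hz0pos n hnI) this
    linarith
  · intro n hn
    have hnI : n ∈ Set.Ioo (0:ℝ) (nmax:ℝ) := ⟨lt_trans hnstarI.1 hn.1, hn.2⟩
    rw [hderivβ n hnI]
    have : 1 < z0 n := by
      have := hz0mono nstar hnstarI n hnI hn.1
      rwa [hz0star] at this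
    have := Real.log_pos this
    linarith
  · intro n hnI hd
    rw [hderivβ n hnI, neg_eq_zero] at hd
    have hz1 : z0 n = 1 := by
      have := Real.exp_log (hz0pos n hnI)
      rw [hd, Real.exp_zero] at this
      exact this.symm
    have := hz0eq n hnI
    rw [hz1, ← hnstar] at this
    exact this.symm
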